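/- In the localized twisted group algebra Q_W, the set {X_w}_{w∈W} of divided-difference elements forms a Q-basis of Q_W; in particular the elements {X_w} are linearly independent over S. -/

import Mathlib

set_option maxHeartbeats 1000000 in
/-- In the localized twisted group algebra `Q_W` (a ring `A`, free
as a left `Q`-module with basis the group elements `δ w`), the divided-difference
elements `X w` (defined from any reduced word by
`X_w = X_{i_1} ⋯ X_{i_r}` with `X_i = (1/α_i)(δ_e − δ_{s_i})`) form a `Q`-basis
of `Q_W`; in particular the family `{X w}` is linearly independent over the
subring `S ⊆ Q`. -/
theorem divided_difference_elements_form_basis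
    {B W : Type*} [Group W] [Fintype W] {M : CoxeterMatrix B} (cs : CoxeterSystem M W)
    {Q : Type*} [CommRing Q]
    (act : W →* RingAut Q)
    (αQ : B → Q) (hα : ∀ i, IsUnit (αQ i))
    {A : Type*} [Ring A] [Module Q A]
    (ι : Q →+* A) (δ : W →* A)
    (hsmul : ∀ (q : Q) (a : A), q • a = ι q * a)
    (hδι : ∀ (w : W) (q : Q), δ w * ι q = ι (act w q) * δ w)
    (bδ : Module.Basis W Q A) (hbδ : ∀ w, (bδ w : A) = δ w)
    (X : W → A)
    (hX : ∀ l : List B, cs.IsReduced l →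
      X (cs.wordProd l) =
        (l.map (fun i => ι (Ring.inverse (αQ i)) * (δ 1 - δ (cs.simple i)))).prod)
    -- a subring `S` of `Q` (e.g. the symmetric algebra inside its localization)
    (S : Type*) [CommRing S] (ιS : S →+* Q) (hιS : Function.Injective ιS) :
    (LinearIndependent Q X ∧ Submodule.span Q (Set.range X) = ⊤) ∧
    (∀ c : W → S, ∑ w : W, ιS (c w) • X w = 0 → ∀ w, c w = 0) := by
  classical
  set f : B → A := fun i => ι (Ring.inverse (αQ i)) * (δ 1 - δ (cs.simple i)) with hf
  set P : List B → A := fun l => (l.map f).prod with hP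
  -- basic multiplication rule
  have mulA : ∀ (i : B) (q : Q) (u : W),
      f i * (q • bδ u) = (Ring.inverse (αQ i) * q) • bδ u
        - (Ring.inverse (αQ i) * act (cs.simple i) q) • bδ (cs.simple i * u) := by
    intro i q u
    rw [hbδ, hbδ, hsmul, hsmul, hsmul, hf]
    simp only [map_one, map_mul]
    have h1 : δ (cs.simple i) * ι q = ι (act (cs.simple i) q) * δ (cs.simple i) :=
      hδι _ _
    calc (ι (Ring.inverse (αQ i)) * ((1 : A) - δ (cs.simple i))) * (ι q * δ u)
        = ι (Ring.inverse (αQ i)) * (ι q * δ u)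
          - ι (Ring.inverse (αQ i)) * (δ (cs.simple i) * ι q * δ u) := by
          noncomm_ring
      _ = ι (Ring.inverse (αQ i)) * ι q * δ u
          - ι (Ring.inverse (αQ i)) * ι (act (cs.simple i) q) * (δ (cs.simple i) * δ u) := by
          rw [h1]; noncomm_ring
      _ = _ := by rw [← map_mul, ← map_mul, ← map_mul δ]
  -- coordinate formula for left multiplication by `f i`
  have repr_mul : ∀ (i : B) (a : A) (v : W),
      bδ.repr (f i * a) v = Ring.inverse (αQ i) * bδ.repr a v
        - Ring.inverse (αQ i) * act (cs.simple i) (bδ.repr a (cs.simple i * v)) := by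
    intro i a v
    have ha : a = ∑ u : W, bδ.repr a u • bδ u := (bδ.sum_repr a).symm
    have hcancel : ∀ u : W, (cs.simple i * u = v) ↔ (u = cs.simple i * v) := by
      intro u
      constructor
      · intro h; rw [← h, cs.simple_mul_simple_cancel_left]
      · intro h; rw [h, cs.simple_mul_simple_cancel_left]
    conv_lhs => rw [ha]
    rw [Finset.mul_sum]
    have : ∀ u : W, f i * (bδ.repr a u • bδ u)
        = (Ring.inverse (αQ i) * bδ.repr a u) • bδ u
          - (Ring.inverse (αQ i) * act (cs.simple i) (bδ.repr a u)) • bδ (cs.simple i * u) :=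
      fun u => mulA i _ u
    simp_rw [this, map_sum, map_sub, map_smul, Finsupp.coe_finset_sum, Finset.sum_apply,
      Finsupp.coe_sub, Pi.sub_apply, Finsupp.coe_smul, Pi.smul_apply, Module.Basis.repr_self,
      Finsupp.single_apply, smul_eq_mul]
    rw [Finset.sum_sub_distrib]
    congr 1
    · rw [Finset.sum_eq_single v]
      · simp
      · intro u _ hu; simp [hu]
      · intro h; exact absurd (Finset.mem_univ v) h
    · rw [Finset.sum_eq_single (cs.simple i * v)]
      · simp [cs.simple_mul_simple_cancel_left]
      · intro u _ hu
        have : ¬ (cs.simple i * u = v) := fun h => hu ((hcancel u).mp h)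
        simp [this]
      · intro h; exact absurd (Finset.mem_univ _) h
  -- the main triangularity statement, by induction on the word
  have main : ∀ l : List B,
      (∀ v : W, l.length < cs.length v → bδ.repr (P l) v = 0) ∧
      (∀ v : W, cs.length v = l.length → v ≠ cs.wordProd l → bδ.repr (P l) v = 0) ∧
      (cs.IsReduced l → IsUnit (bδ.repr (P l) (cs.wordProd l))) := by
    intro l
    induction l with
    | nil =>
      have hP0 : P [] = bδ 1 := by simp [hP, hbδ]
      refine ⟨?_, ?_, ?_⟩
      · intro v hv
        have hv1 : v ≠ 1 := by
          intro h; rw [h] at hv; simp at hv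
        rw [hP0, Module.Basis.repr_self, Finsupp.single_apply]
        simp [Ne.symm hv1]
      · intro v hv hne
        exact absurd (cs.length_eq_zero_iff.mp hv) (by simpa using hne)
      · intro _
        rw [hP0]
        simp only [CoxeterSystem.wordProd_nil, Module.Basis.repr_self, Finsupp.single_eq_same]
        exact isUnit_one
    | cons i l ih =>
      obtain ⟨ih1, ih2, ih3⟩ := ih
      have hPc : P (i :: l) = f i * P l := by simp [hP]
      have hru : IsUnit (Ring.inverse (αQ i)) := isUnit_ringInverse.mpr (hα i)
      refine ⟨?_, ?_, ?_⟩
      · intro v hv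
        rw [hPc, repr_mul]
        have h1 : bδ.repr (P l) v = 0 := ih1 v (by simp at hv; omega)
        have h2 : bδ.repr (P l) (cs.simple i * v) = 0 := by
          apply ih1
          rcases cs.length_simple_mul v i with h | h <;> simp at hv <;> omega
        simp [h1, h2]
      · intro v hv hne
        rw [hPc, repr_mul]
        have h1 : bδ.repr (P l) v = 0 := ih1 v (by simp at hv; omega)
        have h2 : bδ.repr (P l) (cs.simple i * v) = 0 := by
          rcases cs.length_simple_mul v i with h | h
          · exact ih1 _ (by simp at hv; omega)
          · have hlen : cs.length (cs.simple i * v) = l.length := by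
              simp at hv; omega
            apply ih2 _ hlen
            intro heq
            apply hne
            rw [CoxeterSystem.wordProd_cons, ← heq, cs.simple_mul_simple_cancel_left]
        simp [h1, h2]
      · intro hred
        have hlen : cs.length (cs.wordProd (i :: l)) = l.length + 1 := by
          have := hred; unfold CoxeterSystem.IsReduced at this; simpa using this
        have hredl : cs.IsReduced l := by
          unfold CoxeterSystem.IsReduced
          have h1 : cs.length (cs.wordProd l) ≤ l.length := cs.length_wordProd_le l
          rcases cs.length_simple_mul (cs.wordProd l) i with h | h
          · rw [CoxeterSystem.wordProd_cons] at hlen; omega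
          · rw [CoxeterSystem.wordProd_cons] at hlen; omega
        rw [hPc, repr_mul]
        have h1 : bδ.repr (P l) (cs.wordProd (i :: l)) = 0 := ih1 _ (by omega)
        have h2 : cs.simple i * cs.wordProd (i :: l) = cs.wordProd l := by
          rw [CoxeterSystem.wordProd_cons, cs.simple_mul_simple_cancel_left]
        rw [h1, h2, mul_zero, zero_sub]
        exact ((hru.mul ((ih3 hredl).map (act (cs.simple i) : Q →* Q)))).neg
  -- triangularity for the family `X`
  have hrep : ∀ w : W,
      (∀ v : W, cs.length w < cs.length v → bδ.repr (X w) v = 0) ∧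
      (∀ v : W, cs.length v = cs.length w → v ≠ w → bδ.repr (X w) v = 0) ∧
      IsUnit (bδ.repr (X w) w) := by
    intro w
    obtain ⟨l, hl, rfl⟩ := cs.exists_reduced_word' w
    have hXw : X (cs.wordProd l) = P l := hX l hl
    have hll : cs.length (cs.wordProd l) = l.length := hl
    obtain ⟨m1, m2, m3⟩ := main l
    exact ⟨fun v hv => by rw [hXw]; exact m1 v (by omega),
      fun v hv hne => by rw [hXw]; exact m2 v (by omega) hne,
      by rw [hXw]; exact m3 hl⟩
  -- linear independence
  have li : LinearIndependent Q X := by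
    rw [Fintype.linearIndependent_iff]
    intro g hg
    by_contra hcon
    push_neg at hcon
    obtain ⟨w₁, hw₁⟩ := hcon
    have hTne : (Finset.univ.filter (fun w => g w ≠ 0)).Nonempty :=
      ⟨w₁, by simp [hw₁]⟩
    obtain ⟨w₀, hw₀T, hw₀max⟩ :=
      Finset.exists_max_image (Finset.univ.filter (fun w => g w ≠ 0)) cs.length hTne
    have hgw₀ : g w₀ ≠ 0 := (Finset.mem_filter.mp hw₀T).2
    have h0 : bδ.repr (∑ w : W, g w • X w) w₀ = 0 := by rw [hg]; simp
    rw [map_sum, Finsupp.coe_finset_sum, Finset.sum_apply] at h0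
    have hsum : ∀ w : W, w ∈ Finset.univ → w ≠ w₀ →
        (bδ.repr (g w • X w)) w₀ = 0 := by
      intro w _ hne
      rw [map_smul, Finsupp.coe_smul, Pi.smul_apply, smul_eq_mul]
      rcases eq_or_ne (g w) 0 with h | h
      · rw [h, zero_mul]
      · have hwT : w ∈ Finset.univ.filter (fun w => g w ≠ 0) := by simp [h]
        have hle : cs.length w ≤ cs.length w₀ := hw₀max w hwT
        rcases lt_or_eq_of_le hle with hlt | heq
        · rw [(hrep w).1 w₀ hlt, mul_zero]
        · rw [(hrep w).2.1 w₀ heq.symm (Ne.symm hne), mul_zero]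
    rw [Finset.sum_eq_single w₀ hsum (fun h => absurd (Finset.mem_univ w₀) h)] at h0
    rw [map_smul, Finsupp.coe_smul, Pi.smul_apply, smul_eq_mul] at h0
    exact hgw₀ (((hrep w₀).2.2).mul_left_eq_zero.mp h0)
  -- spanning
  have hspan : ∀ w : W, δ w ∈ Submodule.span Q (Set.range X) := by
    have key : ∀ n : ℕ, ∀ w : W, cs.length w ≤ n →
        δ w ∈ Submodule.span Q (Set.range X) := by
      intro n
      induction n using Nat.strong_induction_on with
      | _ n ihn =>
        intro w hw
        have hu := (hrep w).2.2
        have hXsum : X w = ∑ v : W, bδ.repr (X w) v • δ v := by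
          conv_lhs => rw [← bδ.sum_repr (X w)]
          exact Finset.sum_congr rfl (fun v _ => by rw [hbδ])
        have hXsplit : (bδ.repr (X w) w) • δ w
            = X w - ∑ v ∈ Finset.univ.erase w, bδ.repr (X w) v • δ v := by
          have h' := hXsum
          rw [← Finset.add_sum_erase _ (fun v => bδ.repr (X w) v • δ v)
            (Finset.mem_univ w)] at h'
          exact eq_sub_of_add_eq h'.symm
        have hXmem : X w ∈ Submodule.span Q (Set.range X) :=
          Submodule.subset_span ⟨w, rfl⟩
        have hrest : ∑ v ∈ Finset.univ.erase w, bδ.repr (X w) v • δ v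
            ∈ Submodule.span Q (Set.range X) := by
          apply Submodule.sum_mem
          intro v hv
          rcases eq_or_ne (bδ.repr (X w) v) 0 with h | h
          · rw [h, zero_smul]; exact Submodule.zero_mem _
          · have hvne : v ≠ w := (Finset.mem_erase.mp hv).1
            have h1 : ¬ (cs.length w < cs.length v) := fun hlt => h ((hrep w).1 v hlt)
            have h2 : cs.length v ≠ cs.length w := fun heq => h ((hrep w).2.1 v heq hvne)
            have hlt : cs.length v < cs.length w := by omega
            exact Submodule.smul_mem _ _ (ihn (cs.length v) (by omega) v le_rfl)
        have hδmem : (bδ.repr (X w) w) • δ w ∈ Submodule.span Q (Set.range X) := by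
          rw [hXsplit]; exact Submodule.sub_mem _ hXmem hrest
        have := Submodule.smul_mem _ (↑hu.unit⁻¹ : Q) hδmem
        rwa [smul_smul, IsUnit.val_inv_mul, one_smul] at this
    exact fun w => key (cs.length w) w le_rfl
  have hspan' : Submodule.span Q (Set.range X) = ⊤ := by
    rw [eq_top_iff, ← bδ.span_eq]
    apply Submodule.span_le.mpr
    rintro a ⟨w, rfl⟩
    rw [hbδ]
    exact hspan w
  refine ⟨⟨li, hspan'⟩, ?_⟩
  intro c hc w
  have := Fintype.linearIndependent_iff.mp li (fun w => ιS (c w)) hc w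
  exact hιS (by rw [this, map_zero])
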